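/- For every n ∈ ℕ and every (A_1, …, A_n) ∈ (𝔽_q^1[X])^n, the fundamental cylinder I(A_1, …, A_n) is a disc in Δ with diameter |I(A_1, …, A_n)| = q^{−2∑_{i=1}^n deg A_i − 1}. -/

import Mathlib

open scoped ENNReal
open Filter
open scoped Classical

noncomputable section

namespace LaurentCF

/-! We model the field `𝔽_q((X⁻¹))` of formal Laurent series in `X⁻¹` by
`LaurentSeries Fq = HahnSeries ℤ Fq`, where the Hahn-series variable plays the
role of `X⁻¹`: the coefficient at `i : ℤ` is the coefficient `c_i` of `X^{-i}`. -/

variable (Fq : Type) [Field Fq] [Fintype Fq]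

/-- `deg x = - inf {n : ℤ | c_n ≠ 0}` (with junk value `0` at `x = 0`). -/
def lsDeg (x : LaurentSeries Fq) : ℤ := -(HahnSeries.order x)

/-- The absolute value `‖x‖_q = q ^ (deg x)`, `‖0‖_q = 0`. -/
def qnorm (x : LaurentSeries Fq) : ℝ :=
  if x = 0 then 0 else (Fintype.card Fq : ℝ) ^ (lsDeg Fq x)

variable {Fq}

lemma one_lt_cardR : (1 : ℝ) < (Fintype.card Fq : ℝ) := by
  exact_mod_cast Fintype.one_lt_card

lemma qnorm_nonneg (x : LaurentSeries Fq) : 0 ≤ qnorm Fq x := by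
  unfold qnorm
  split
  · exact le_refl 0
  · exact zpow_nonneg (by positivity) _

lemma qnorm_zero : qnorm Fq (0 : LaurentSeries Fq) = 0 := by simp [qnorm]

lemma qnorm_pos {x : LaurentSeries Fq} (hx : x ≠ 0) : 0 < qnorm Fq x := by
  unfold qnorm
  rw [if_neg hx]
  exact zpow_pos (lt_trans one_pos one_lt_cardR) _

lemma qnorm_neg (x : LaurentSeries Fq) : qnorm Fq (-x) = qnorm Fq x := by
  unfold qnorm lsDeg
  rw [HahnSeries.order_neg, neg_eq_zero]

lemma qnorm_add_le (x y : LaurentSeries Fq) :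
    qnorm Fq (x + y) ≤ max (qnorm Fq x) (qnorm Fq y) := by
  by_cases hxy : x + y = 0
  · rw [hxy, qnorm_zero]
    exact le_max_of_le_left (qnorm_nonneg x)
  by_cases hx : x = 0
  · simp [hx, le_max_of_le_right (le_refl (qnorm Fq y))]
  by_cases hy : y = 0
  · simp [hy, le_max_of_le_left (le_refl (qnorm Fq x))]
  have hmin : min (HahnSeries.order x) (HahnSeries.order y) ≤ HahnSeries.order (x + y) :=
    HahnSeries.min_order_le_order_add hxy
  have hdeg : lsDeg Fq (x + y) ≤ max (lsDeg Fq x) (lsDeg Fq y) := by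
    unfold lsDeg
    rw [min_le_iff] at hmin
    rw [le_max_iff]
    omega
  have h1 : (1 : ℝ) ≤ (Fintype.card Fq : ℝ) := le_of_lt one_lt_cardR
  unfold qnorm
  rw [if_neg hxy, if_neg hx, if_neg hy]
  rcases le_total (lsDeg Fq x) (lsDeg Fq y) with h | h
  · refine le_max_of_le_right ?_
    exact zpow_le_zpow_right₀ h1 (by rw [max_eq_right h] at hdeg; exact hdeg)
  · refine le_max_of_le_left ?_
    exact zpow_le_zpow_right₀ h1 (by rw [max_eq_left h] at hdeg; exact hdeg)

variable (Fq) in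
/-- The open unit disc `Δ = {x : ‖x‖_q < 1}`. -/
structure Delta : Type where
  val : LaurentSeries Fq
  norm_lt : qnorm Fq val < 1

lemma Delta.ext' {x y : Delta Fq} (h : x.val = y.val) : x = y := by
  cases x; cases y; simpa using h

instance : EMetricSpace (Delta Fq) where
  edist x y := ENNReal.ofReal (qnorm Fq (x.val - y.val))
  edist_self x := by simp [qnorm]
  edist_comm x y := by
    show ENNReal.ofReal _ = ENNReal.ofReal _
    rw [show x.val - y.val = -(y.val - x.val) by ring, qnorm_neg]
  edist_triangle x y z := by
    show ENNReal.ofReal _ ≤ ENNReal.ofReal _ + ENNReal.ofReal _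
    have h := qnorm_add_le (x.val - y.val) (y.val - z.val)
    rw [sub_add_sub_cancel] at h
    refine le_trans (ENNReal.ofReal_le_ofReal h) ?_
    rcases max_cases (qnorm Fq (x.val - y.val)) (qnorm Fq (y.val - z.val)) with ⟨heq, _⟩ | ⟨heq, _⟩ <;>
      rw [heq]
    · exact le_self_add
    · exact le_add_self
  eq_of_edist_eq_zero := by
    intro x y h
    have h : ENNReal.ofReal (qnorm Fq (x.val - y.val)) = 0 := h
    rw [ENNReal.ofReal_eq_zero] at h
    by_contra hne
    have : x.val - y.val ≠ 0 := fun hc => hne (Delta.ext' (sub_eq_zero.mp hc))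
    exact absurd h (not_le.mpr (qnorm_pos this))

instance : MeasurableSpace (Delta Fq) := borel _
instance : BorelSpace (Delta Fq) := ⟨rfl⟩

variable (Fq)

/-- The integral part `[x] = ∑_{i ≤ 0} c_i X^{-i}`. -/
def intPart (x : LaurentSeries Fq) : LaurentSeries Fq :=
  ⟨fun i => if i ≤ 0 then x.coeff i else 0, x.isPWO_support'.mono (by
    intro i hi
    simp only [Function.mem_support, ne_eq] at hi ⊢
    intro h
    apply hi
    split <;> simp [h])⟩

/-- The Gauss-type map `T(x) = 1/x - [1/x]`, `T(0) = 0` (extended by the same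
formula outside `Δ`). -/
def Tmap (x : LaurentSeries Fq) : LaurentSeries Fq :=
  if x = 0 then 0 else x⁻¹ - intPart Fq x⁻¹

/-- The natural interpretation of a polynomial `P(X) = ∑ a_i X^i` as a Laurent
series in `X⁻¹` (coefficient `a_i` at index `-i`). -/
def polyToLS (P : Polynomial Fq) : LaurentSeries Fq :=
  ∑ i ∈ P.support, HahnSeries.single (-(i : ℤ)) (P.coeff i)

/-- The inverse correspondence (junk outside the range of `polyToLS`). -/
def lsToPoly : LaurentSeries Fq → Polynomial Fq := Function.invFun (polyToLS Fq)

/-- The digit `A_{n+1}(x) = [1 / T^n(x)]`, read off as a polynomial in `X`.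
So `digit Fq n x` is the `(n+1)`-st continued fraction digit of `x`. -/
def digit (n : ℕ) (x : LaurentSeries Fq) : Polynomial Fq :=
  lsToPoly Fq (intPart Fq ((Tmap Fq)^[n] x)⁻¹)

/-- The set of rational points: the image of `𝔽_q(X)` in `𝔽_q((X⁻¹))`. -/
def ratSet : Set (LaurentSeries Fq) := Set.range ((↑) : RatFunc Fq → LaurentSeries Fq)

/-- `𝔽_q^1[X]`, the set of polynomials of degree at least one. -/
def poly1 : Set (Polynomial Fq) := {A | 1 ≤ A.natDegree}

/-- The set `E` of points of `Δ ∖ 𝔽_q(X)` with pairwise distinct digits. -/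
def Eset : Set (Delta Fq) :=
  {x | x.val ∉ ratSet Fq ∧ ∀ m n : ℕ, m ≠ n → digit Fq m x.val ≠ digit Fq n x.val}

/-- `Q_N(S)`, the elements of `S` of degree at most `N`. -/
def QN (N : ℕ) (S : Set (Polynomial Fq)) : Set (Polynomial Fq) :=
  {A ∈ S | A.natDegree ≤ N}

/-- The relative upper density `d̄_q(U|S)`. -/
def relDensQ (U S : Set (Polynomial Fq)) : ℝ :=
  Filter.limsup (fun N : ℕ => ((QN Fq N U).ncard : ℝ) / ((QN Fq N S).ncard)) Filter.atTop

/-- `d̄_q(U) := d̄_q(U | 𝔽_q^1[X])`. -/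
def densQ (U : Set (Polynomial Fq)) : ℝ := relDensQ Fq U (poly1 Fq)

/-- The relative upper density `d̄(B|G)` for sets of natural numbers. -/
def relDensN (B G : Set ℕ) : ℝ :=
  Filter.limsup (fun N : ℕ => ((B ∩ Set.Icc 1 N).ncard : ℝ) / ((G ∩ Set.Icc 1 N).ncard))
    Filter.atTop

/-- The upper density `d̄(B) = d̄(B|ℕ)`. -/
def densN (B : Set ℕ) : ℝ :=
  Filter.limsup (fun N : ℕ => ((B ∩ Set.Icc 1 N).ncard : ℝ) / (N : ℝ)) Filter.atTop

/-- `deg S`, the set of degrees of elements of `S`. -/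
def degSet (S : Set (Polynomial Fq)) : Set ℕ := Polynomial.natDegree '' S

/-- `S` has growth density with exponent `α`. -/
def HasGrowthDensity (S : Set (Polynomial Fq)) (α : ℝ) : Prop :=
  ∃ γ₁ > (0 : ℝ), ∃ γ₂ > (0 : ℝ), ∃ β ≥ (0 : ℝ), ∀ᶠ N : ℕ in Filter.atTop,
    γ₁ * (Fintype.card Fq : ℝ) ^ ((N : ℝ) / α) / (N : ℝ) ^ β ≤ ((QN Fq N S).ncard : ℝ) ∧
    ((QN Fq N S).ncard : ℝ) ≤ γ₂ * (Fintype.card Fq : ℝ) ^ ((N : ℝ) / α) / (N : ℝ) ^ β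


/-- The fundamental cylinder `I(A_1, …, A_n)` (here `A : Fin n → _`, with `A i`
playing the role of `A_{i+1}`): the set of `x ∈ Δ` whose first `n` digits are
defined and equal to the prescribed ones. -/
def cylinder (n : ℕ) (A : Fin n → Polynomial Fq) : Set (Delta Fq) :=
  {x | ∀ i : Fin n, (Tmap Fq)^[(i : ℕ)] x.val ≠ 0 ∧ digit Fq i x.val = A i}

/-- The convergence exponent `τ(S) = inf {s ≥ 0 : ∑_{A ∈ S} (q^{-2 deg A})^s < ∞}`. -/
def convExp (S : Set (Polynomial Fq)) : ℝ :=
  sInf {s : ℝ | 0 ≤ s ∧ Summable (fun A : S =>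
    ((Fintype.card Fq : ℝ) ^ (-2 * ((A : Polynomial Fq).natDegree : ℤ))) ^ s)}

/-- The set `E` together with the digit restriction and growth condition defining a
seed set: `R_t(K) = {x ∈ E : A_n(x) ∈ K, (2n)^t ≤ deg A_n(x) < (2n+1)^t for all n ≥ 1}`.
(Recall `digit Fq n x` is `A_{n+1}(x)`.) -/
def seedSet (t : ℕ) (K : Set (Polynomial Fq)) : Set (Delta Fq) :=
  {x | x ∈ Eset Fq ∧ ∀ n : ℕ,
    digit Fq n x.val ∈ K ∧
    (2 * (n + 1)) ^ t ≤ (digit Fq n x.val).natDegree ∧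
    (digit Fq n x.val).natDegree < (2 * (n + 1) + 1) ^ t}

/-- The set `𝓘_q` of irreducible polynomials of positive degree. -/
def irreds : Set (Polynomial Fq) := {P ∈ poly1 Fq | Irreducible P}

/-- `f` is Hölder continuous with exponent `γ` on `F`. -/
def HolderOnDelta (F : Set (Delta Fq)) (f : Delta Fq → Delta Fq) (γ : ℝ) : Prop :=
  ∃ C > (0 : ℝ), ∀ x ∈ F, ∀ y ∈ F,
    qnorm Fq ((f x).val - (f y).val) ≤ C * qnorm Fq (x.val - y.val) ^ γ

/-- `f` is almost Lipschitz on `F`: Hölder continuous with every exponent `γ ∈ (0,1)`. -/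
def AlmostLipschitzOn (F : Set (Delta Fq)) (f : Delta Fq → Delta Fq) : Prop :=
  ∀ γ : ℝ, 0 < γ → γ < 1 → HolderOnDelta Fq F f γ

/-- Insertion of the blocks `W_k` (given as lists, sorted by degree) into the digit
sequence `a` (where `a n` is the `(n+1)`-st digit), each block `W_k` being inserted
immediately after the digit with (1-based) index `M k`. -/
def insertSeq (M : ℕ → ℕ) (W : ℕ → List (Polynomial Fq)) (a : ℕ → Polynomial Fq)
    (n : ℕ) : Polynomial Fq :=
  let c : ℕ → ℕ := fun k => M k + ∑ j ∈ Finset.range k, (W (j + 1)).length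
  let k := Nat.findGreatest (fun j => c j ≤ n) n
  if n - c k < M (k + 1) - M k then a (M k + (n - c k))
  else (W (k + 1)).getD (n - c k - (M (k + 1) - M k)) 0

/-- The function `μ : [1,∞) → ℕ`, `μ(x) = k` for `x ∈ [k!, (k+1)!)`. -/
def muFn (x : ℝ) : ℕ := sSup {k : ℕ | (k.factorial : ℝ) ≤ x}

/-- The set `P = ⋃_{k ≥ 2} {k! + ik : i = 0, …, k! - 1}`. -/
def Pset : Set ℕ :=
  ⋃ k ∈ {k : ℕ | 2 ≤ k}, {m | ∃ i < k.factorial, m = k.factorial + i * k}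

/-! ### Auxiliary lemmas for `cylinder_is_disc` -/

section Aux
variable {Fq : Type} [Field Fq] [Fintype Fq]

lemma cardR_pos : (0:ℝ) < (Fintype.card Fq : ℝ) := lt_trans one_pos one_lt_cardR

lemma qnorm_of_ne {x : LaurentSeries Fq} (hx : x ≠ 0) :
    qnorm Fq x = (Fintype.card Fq : ℝ) ^ (lsDeg Fq x) := if_neg hx

lemma qnorm_one : qnorm Fq (1 : LaurentSeries Fq) = 1 := by
  rw [qnorm_of_ne one_ne_zero]
  unfold lsDeg
  rw [HahnSeries.order_one]
  norm_num

lemma qnorm_mul (x y : LaurentSeries Fq) :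
    qnorm Fq (x * y) = qnorm Fq x * qnorm Fq y := by
  by_cases hx : x = 0
  · simp [hx, qnorm_zero]
  by_cases hy : y = 0
  · simp [hy, qnorm_zero]
  rw [qnorm_of_ne hx, qnorm_of_ne hy, qnorm_of_ne (mul_ne_zero hx hy)]
  unfold lsDeg
  rw [HahnSeries.order_mul hx hy, neg_add, zpow_add₀ (ne_of_gt (cardR_pos (Fq := Fq)))]

lemma qnorm_inv (x : LaurentSeries Fq) : qnorm Fq x⁻¹ = (qnorm Fq x)⁻¹ := by
  by_cases hx : x = 0
  · simp [hx, qnorm_zero]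
  have h := qnorm_mul x x⁻¹
  rw [mul_inv_cancel₀ hx, qnorm_one] at h
  exact eq_inv_of_mul_eq_one_right h.symm

lemma qnorm_add_eq_left {x y : LaurentSeries Fq} (h : qnorm Fq y < qnorm Fq x) :
    qnorm Fq (x + y) = qnorm Fq x := by
  have h1 := qnorm_add_le x y
  rw [max_eq_left h.le] at h1
  have h2 : qnorm Fq x ≤ max (qnorm Fq (x + y)) (qnorm Fq y) := by
    have := qnorm_add_le (x + y) (-y)
    rw [add_neg_cancel_right, qnorm_neg] at this
    exact this
  rcases max_cases (qnorm Fq (x + y)) (qnorm Fq y) with ⟨he, _⟩ | ⟨he, _⟩ <;> rw [he] at h2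
  · exact le_antisymm h1 h2
  · linarith

lemma lsDeg_neg_of_lt_one {x : LaurentSeries Fq} (hx : x ≠ 0)
    (h : qnorm Fq x < 1) : lsDeg Fq x < 0 := by
  by_contra hd
  push_neg at hd
  rw [qnorm_of_ne hx] at h
  have := one_le_zpow₀ (le_of_lt (one_lt_cardR (Fq := Fq))) hd
  linarith

lemma qnorm_le_of_lt_one {x : LaurentSeries Fq} (h : qnorm Fq x < 1) :
    qnorm Fq x ≤ (Fintype.card Fq : ℝ) ^ (-1 : ℤ) := by
  by_cases hx : x = 0
  · rw [hx, qnorm_zero]; positivity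
  have hd : lsDeg Fq x ≤ -1 := by have := lsDeg_neg_of_lt_one hx h; omega
  rw [qnorm_of_ne hx]
  exact zpow_le_zpow_right₀ (le_of_lt one_lt_cardR) hd

lemma order_pos_of_lt_one {x : LaurentSeries Fq} (hx : x ≠ 0)
    (h : qnorm Fq x < 1) : 0 < x.order := by
  have := lsDeg_neg_of_lt_one hx h
  unfold lsDeg at this
  omega

lemma lt_one_of_order_pos {x : LaurentSeries Fq} (h : x = 0 ∨ 0 < x.order) :
    qnorm Fq x < 1 := by
  rcases h with h | h
  · rw [h, qnorm_zero]; exact one_pos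
  have hx : x ≠ 0 := by
    rintro rfl
    rw [HahnSeries.order_zero] at h
    exact lt_irrefl 0 h
  rw [qnorm_of_ne hx]
  exact zpow_lt_one_of_neg₀ one_lt_cardR (by unfold lsDeg; omega)

lemma intPart_coeff (x : LaurentSeries Fq) (i : ℤ) :
    (intPart Fq x).coeff i = if i ≤ 0 then x.coeff i else 0 := rfl

lemma intPart_add (x y : LaurentSeries Fq) :
    intPart Fq (x + y) = intPart Fq x + intPart Fq y := by
  apply HahnSeries.coeff_injective
  funext i
  rw [HahnSeries.coeff_add' ]
  simp only [intPart_coeff, Pi.add_apply, HahnSeries.coeff_add]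
  split <;> simp

lemma intPart_eq_zero_of_lt_one {x : LaurentSeries Fq} (h : qnorm Fq x < 1) :
    intPart Fq x = 0 := by
  apply HahnSeries.coeff_injective
  funext i
  rw [intPart_coeff]
  by_cases hx : x = 0
  · simp [hx]
  have ho := order_pos_of_lt_one hx h
  split
  · exact HahnSeries.coeff_eq_zero_of_lt_order (by omega)
  · simp

lemma qnorm_sub_intPart_lt_one (x : LaurentSeries Fq) :
    qnorm Fq (x - intPart Fq x) < 1 := by
  set z := x - intPart Fq x with hz
  have hc : ∀ i : ℤ, i ≤ 0 → z.coeff i = 0 := by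
    intro i hi
    rw [hz, HahnSeries.coeff_sub, intPart_coeff, if_pos hi, sub_self]
  apply lt_one_of_order_pos
  by_cases hz0 : z = 0
  · exact Or.inl hz0
  · right
    by_contra hor
    push_neg at hor
    exact (mt HahnSeries.coeff_order_eq_zero.mp hz0) (hc _ hor)

end Aux

section Aux2
set_option linter.unusedSectionVars false
variable {Fq : Type} [Field Fq] [Fintype Fq]

lemma polyToLS_coeff (P : Polynomial Fq) (k : ℤ) :
    (polyToLS Fq P).coeff k = if k ≤ 0 then P.coeff (-k).toNat else 0 := by
  unfold polyToLS
  have hms : (∑ i ∈ P.support, HahnSeries.single (-(i:ℤ)) (P.coeff i)).coeff k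
      = ∑ i ∈ P.support, (HahnSeries.single (-(i:ℤ)) (P.coeff i)).coeff k :=
    map_sum (HahnSeries.coeff.addMonoidHom k) _ _
  rw [hms]
  simp only [HahnSeries.coeff_single]
  by_cases hk : k ≤ 0
  · rw [if_pos hk]
    rw [Finset.sum_eq_single ((-k).toNat)]
    · rw [if_pos (by omega)]
    · intro b hb hbne
      rw [if_neg (by omega)]
    · intro hns
      rw [if_pos (by omega), Polynomial.notMem_support_iff.mp hns]
  · rw [if_neg hk]
    apply Finset.sum_eq_zero
    intro b hb
    rw [if_neg (by omega)]

lemma polyToLS_injective : Function.Injective (polyToLS Fq) := by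
  intro P Q h
  ext j
  have := congrArg (fun z : LaurentSeries Fq => z.coeff (-(j:ℤ))) h
  simpa [polyToLS_coeff] using this

lemma lsToPoly_polyToLS (P : Polynomial Fq) : lsToPoly Fq (polyToLS Fq P) = P :=
  Function.leftInverse_invFun (polyToLS_injective) P

lemma intPart_polyToLS (P : Polynomial Fq) :
    intPart Fq (polyToLS Fq P) = polyToLS Fq P := by
  apply HahnSeries.coeff_injective
  funext i
  rw [intPart_coeff, polyToLS_coeff]
  split <;> simp

lemma polyToLS_zero : polyToLS Fq (0 : Polynomial Fq) = 0 := by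
  unfold polyToLS; simp

lemma polyToLS_ne_zero {P : Polynomial Fq} (hP : P ≠ 0) : polyToLS Fq P ≠ 0 := by
  intro h
  exact hP (polyToLS_injective (by rw [h, polyToLS_zero]))

lemma polyToLS_order {P : Polynomial Fq} (hP : P ≠ 0) :
    (polyToLS Fq P).order = -(P.natDegree : ℤ) := by
  have h1 : (polyToLS Fq P).coeff (-(P.natDegree : ℤ)) ≠ 0 := by
    rw [polyToLS_coeff, if_pos (by omega)]
    simpa using Polynomial.leadingCoeff_ne_zero.mpr hP
  apply le_antisymm (HahnSeries.order_le_of_coeff_ne_zero h1)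
  have h2 := (mt HahnSeries.coeff_order_eq_zero.mp (polyToLS_ne_zero hP))
  rw [polyToLS_coeff] at h2
  by_contra hlt
  push_neg at hlt
  rcases le_or_gt ((polyToLS Fq P).order) 0 with ho | ho
  · rw [if_pos ho] at h2
    exact h2 (Polynomial.coeff_eq_zero_of_natDegree_lt (by omega))
  · rw [if_neg (by omega)] at h2
    exact h2 rfl

lemma qnorm_polyToLS {P : Polynomial Fq} (hP : P ≠ 0) :
    qnorm Fq (polyToLS Fq P) = (Fintype.card Fq : ℝ) ^ (P.natDegree : ℤ) := by
  rw [qnorm_of_ne (polyToLS_ne_zero hP)]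
  unfold lsDeg
  rw [polyToLS_order hP, neg_neg]

lemma intPart_mem_range (x : LaurentSeries Fq) :
    ∃ P : Polynomial Fq, polyToLS Fq P = intPart Fq x := by
  classical
  set N : ℕ := (-x.order).toNat with hN
  refine ⟨∑ j ∈ Finset.range (N + 1), Polynomial.monomial j (x.coeff (-(j : ℤ))), ?_⟩
  have hPc : ∀ m : ℕ,
      (∑ j ∈ Finset.range (N + 1), Polynomial.monomial j (x.coeff (-(j : ℤ)))).coeff m
      = if m ≤ N then x.coeff (-(m : ℤ)) else 0 := by
    intro m
    rw [Polynomial.finset_sum_coeff]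
    simp only [Polynomial.coeff_monomial]
    by_cases hm : m ≤ N
    · rw [if_pos hm, Finset.sum_eq_single m]
      · simp
      · intro b _ hbne; rw [if_neg hbne]
      · intro hns; exact absurd (Finset.mem_range.mpr (by omega)) hns
    · rw [if_neg hm]
      apply Finset.sum_eq_zero
      intro b hb
      rw [Finset.mem_range] at hb
      rw [if_neg (by omega)]
  apply HahnSeries.coeff_injective
  funext k
  rw [polyToLS_coeff, intPart_coeff]
  by_cases hk : k ≤ 0
  · rw [if_pos hk, if_pos hk, hPc]
    by_cases hkN : (-k).toNat ≤ N
    · rw [if_pos hkN]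
      congr 1
      omega
    · rw [if_neg hkN]
      refine (HahnSeries.coeff_eq_zero_of_lt_order ?_).symm
      omega
  · rw [if_neg hk, if_neg hk]

end Aux2

section Aux3
set_option linter.unusedSectionVars false
variable {Fq : Type} [Field Fq] [Fintype Fq]

lemma qnorm_Tmap_lt_one (x : LaurentSeries Fq) : qnorm Fq (Tmap Fq x) < 1 := by
  unfold Tmap
  split
  · rw [qnorm_zero]; exact one_pos
  · exact qnorm_sub_intPart_lt_one _

/-- The Gauss map on `Δ`. -/
def Tdelta (x : Delta Fq) : Delta Fq := ⟨Tmap Fq x.val, qnorm_Tmap_lt_one _⟩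

lemma poly1_ne_zero {a : Polynomial Fq} (ha : a ∈ poly1 Fq) : a ≠ 0 := by
  intro h
  have : (1:ℕ) ≤ (0:Polynomial Fq).natDegree := h ▸ ha
  simp at this

lemma qnorm_polyToLS_add {a : Polynomial Fq} (ha : a ∈ poly1 Fq)
    {y : LaurentSeries Fq} (hy : qnorm Fq y < 1) :
    qnorm Fq (polyToLS Fq a + y) = (Fintype.card Fq : ℝ) ^ (a.natDegree : ℤ) := by
  rw [qnorm_add_eq_left, qnorm_polyToLS (poly1_ne_zero ha)]
  rw [qnorm_polyToLS (poly1_ne_zero ha)]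
  calc qnorm Fq y < 1 := hy
    _ ≤ (Fintype.card Fq : ℝ) ^ (a.natDegree : ℤ) :=
        one_le_zpow₀ (le_of_lt one_lt_cardR) (by exact_mod_cast Nat.zero_le _)

lemma polyToLS_add_ne_zero {a : Polynomial Fq} (ha : a ∈ poly1 Fq)
    {y : LaurentSeries Fq} (hy : qnorm Fq y < 1) : polyToLS Fq a + y ≠ 0 := by
  intro h
  have := qnorm_polyToLS_add ha hy
  rw [h, qnorm_zero] at this
  have : (0:ℝ) < (Fintype.card Fq : ℝ) ^ (a.natDegree : ℤ) := zpow_pos cardR_pos _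
  linarith [this.trans_eq ‹(0:ℝ) = _›.symm] 

/-- The homography `y ↦ 1/(a + y)` on `Δ`, for `deg a ≥ 1`. -/
def phiMap (a : Polynomial Fq) (ha : a ∈ poly1 Fq) (y : Delta Fq) : Delta Fq :=
  ⟨(polyToLS Fq a + y.val)⁻¹, by
    rw [qnorm_inv, qnorm_polyToLS_add ha y.norm_lt]
    rw [← zpow_neg]
    exact zpow_lt_one_of_neg₀ one_lt_cardR (by have h1 : 1 ≤ a.natDegree := ha; omega)⟩

lemma qnorm_phiMap (a : Polynomial Fq) (ha : a ∈ poly1 Fq) (y : Delta Fq) :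
    qnorm Fq (phiMap a ha y).val = (Fintype.card Fq : ℝ) ^ (-(a.natDegree : ℤ)) := by
  show qnorm Fq (polyToLS Fq a + y.val)⁻¹ = _
  rw [qnorm_inv, qnorm_polyToLS_add ha y.norm_lt, ← zpow_neg]

lemma qnorm_phiMap_sub (a : Polynomial Fq) (ha : a ∈ poly1 Fq) (x y : Delta Fq) :
    qnorm Fq ((phiMap a ha x).val - (phiMap a ha y).val)
      = (Fintype.card Fq : ℝ) ^ (-2 * (a.natDegree : ℤ)) * qnorm Fq (x.val - y.val) := by
  have hx := polyToLS_add_ne_zero ha x.norm_lt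
  have hy := polyToLS_add_ne_zero ha y.norm_lt
  have key : (phiMap a ha x).val - (phiMap a ha y).val
      = (y.val - x.val) * ((polyToLS Fq a + x.val) * (polyToLS Fq a + y.val))⁻¹ := by
    show (polyToLS Fq a + x.val)⁻¹ - (polyToLS Fq a + y.val)⁻¹ = _
    field_simp
    ring
  rw [key, qnorm_mul, qnorm_inv, qnorm_mul, qnorm_polyToLS_add ha x.norm_lt,
    qnorm_polyToLS_add ha y.norm_lt, show y.val - x.val = -(x.val - y.val) by ring, qnorm_neg]
  rw [← zpow_add₀ (ne_of_gt (cardR_pos (Fq := Fq))), ← zpow_neg]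
  rw [show -((a.natDegree:ℤ) + a.natDegree) = -2 * (a.natDegree:ℤ) by ring, mul_comm]

lemma cylinder_zero (A : Fin 0 → Polynomial Fq) : cylinder Fq 0 A = Set.univ := by
  ext x
  simp [cylinder]

lemma cylinder_succ (n : ℕ) (A : Fin (n + 1) → Polynomial Fq) (h0 : A 0 ∈ poly1 Fq) :
    cylinder Fq (n + 1) A = phiMap (A 0) h0 '' cylinder Fq n (A ∘ Fin.succ) := by
  ext x
  constructor
  · intro hx
    have h00 := hx 0
    simp only [Fin.val_zero, Function.iterate_zero, id_eq] at h00
    obtain ⟨hx0, hd0⟩ := h00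
    obtain ⟨P, hP⟩ := intPart_mem_range (x.val⁻¹)
    have hip : intPart Fq x.val⁻¹ = polyToLS Fq (A 0) := by
      rw [← hP]
      congr 1
      rw [← hd0]
      unfold digit
      simp only [Function.iterate_zero, id_eq]
      rw [← hP, lsToPoly_polyToLS]
    have hT : Tmap Fq x.val = x.val⁻¹ - intPart Fq x.val⁻¹ := if_neg hx0
    refine ⟨Tdelta x, ?_, ?_⟩
    · intro i
      have hi := hx i.succ
      simp only [Fin.val_succ] at hi
      rw [Function.iterate_succ_apply] at hi
      refine ⟨hi.1, ?_⟩
      show digit Fq (i : ℕ) (Tmap Fq x.val) = A i.succ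
      rw [← hi.2]
      unfold digit
      rw [Function.iterate_succ_apply]
    · apply Delta.ext'
      show (polyToLS Fq (A 0) + (Tdelta x).val)⁻¹ = x.val
      show (polyToLS Fq (A 0) + Tmap Fq x.val)⁻¹ = x.val
      rw [hT, hip]
      have hX : polyToLS Fq (A 0) + (x.val⁻¹ - polyToLS Fq (A 0)) = x.val⁻¹ := by ring
      rw [hX, inv_inv]
  · rintro ⟨y, hy, rfl⟩
    have hane := polyToLS_add_ne_zero h0 y.norm_lt
    have hval : (phiMap (A 0) h0 y).val = (polyToLS Fq (A 0) + y.val)⁻¹ := rfl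
    have hx0 : (phiMap (A 0) h0 y).val ≠ 0 := by rw [hval]; exact inv_ne_zero hane
    have hinv : ((phiMap (A 0) h0 y).val)⁻¹ = polyToLS Fq (A 0) + y.val := by
      rw [hval, inv_inv]
    have hip : intPart Fq ((phiMap (A 0) h0 y).val)⁻¹ = polyToLS Fq (A 0) := by
      rw [hinv, intPart_add, intPart_polyToLS, intPart_eq_zero_of_lt_one y.norm_lt, add_zero]
    have hT : Tmap Fq (phiMap (A 0) h0 y).val = y.val := by
      unfold Tmap
      rw [if_neg hx0, hip, hinv, add_sub_cancel_left]
    intro i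
    refine Fin.cases ?_ ?_ i
    · simp only [Fin.val_zero, Function.iterate_zero, id_eq]
      refine ⟨hx0, ?_⟩
      unfold digit
      simp only [Function.iterate_zero, id_eq]
      rw [hip, lsToPoly_polyToLS]
    · intro j
      have hj := hy j
      simp only [Fin.val_succ]
      rw [Function.iterate_succ_apply, hT]
      refine ⟨hj.1, ?_⟩
      have : digit Fq (j.val + 1) (phiMap (A 0) h0 y).val = digit Fq j.val y.val := by
        unfold digit
        rw [Function.iterate_succ_apply, hT]
      rw [this, hj.2]
      rfl

end Aux3

section Aux4
set_option linter.unusedSectionVars false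
variable {Fq : Type} [Field Fq] [Fintype Fq]

lemma Delta.edist_def (x y : Delta Fq) :
    edist x y = ENNReal.ofReal (qnorm Fq (x.val - y.val)) := rfl

lemma ofReal_card_zpow (k : ℤ) :
    ENNReal.ofReal ((Fintype.card Fq : ℝ) ^ k) = (Fintype.card Fq : ℝ≥0∞) ^ k := by
  cases k with
  | ofNat n =>
      rw [Int.ofNat_eq_coe, zpow_natCast, zpow_natCast,
        ENNReal.ofReal_pow (Nat.cast_nonneg _), ENNReal.ofReal_natCast]
  | negSucc n =>
      rw [zpow_negSucc, zpow_negSucc, ENNReal.ofReal_inv_of_pos (pow_pos cardR_pos _),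
        ENNReal.ofReal_pow (Nat.cast_nonneg _), ENNReal.ofReal_natCast]

lemma edist_le_zpow_iff (x y : Delta Fq) (k : ℤ) :
    edist x y ≤ (Fintype.card Fq : ℝ≥0∞) ^ k
      ↔ qnorm Fq (x.val - y.val) ≤ (Fintype.card Fq : ℝ) ^ k := by
  rw [Delta.edist_def, ← ofReal_card_zpow,
    ENNReal.ofReal_le_ofReal_iff (zpow_nonneg (le_of_lt cardR_pos) _)]

lemma edist_le_max (x y z : Delta Fq) :
    edist x z ≤ max (edist x y) (edist y z) := by
  rw [Delta.edist_def, Delta.edist_def, Delta.edist_def]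
  have h := qnorm_add_le (x.val - y.val) (y.val - z.val)
  rw [sub_add_sub_cancel] at h
  refine le_trans (ENNReal.ofReal_le_ofReal h) ?_
  rcases max_cases (qnorm Fq (x.val - y.val)) (qnorm Fq (y.val - z.val)) with ⟨he, _⟩ | ⟨he, _⟩ <;>
    rw [he]
  · exact le_max_left _ _
  · exact le_max_right _ _

lemma edist_phiMap (a : Polynomial Fq) (ha : a ∈ poly1 Fq) (x y : Delta Fq) :
    edist (phiMap a ha x) (phiMap a ha y)
      = (Fintype.card Fq : ℝ≥0∞) ^ (-2 * (a.natDegree : ℤ)) * edist x y := by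
  rw [Delta.edist_def, Delta.edist_def, qnorm_phiMap_sub a ha x y,
    ENNReal.ofReal_mul (zpow_nonneg (le_of_lt cardR_pos) _), ofReal_card_zpow]

lemma phiMap_image_closedBall (a : Polynomial Fq) (ha : a ∈ poly1 Fq) (c : Delta Fq)
    (k : ℤ) (hk : k ≤ -1) :
    phiMap a ha '' EMetric.closedBall c ((Fintype.card Fq : ℝ≥0∞) ^ k)
      = EMetric.closedBall (phiMap a ha c)
          ((Fintype.card Fq : ℝ≥0∞) ^ (-2 * (a.natDegree : ℤ) + k)) := by
  have hQ0 : (Fintype.card Fq : ℝ≥0∞) ≠ 0 := by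
    simp [Fintype.card_ne_zero]
  have hQt : (Fintype.card Fq : ℝ≥0∞) ≠ ⊤ := ENNReal.natCast_ne_top _
  have hd1 : 1 ≤ (a.natDegree : ℤ) := by exact_mod_cast (ha : 1 ≤ a.natDegree)
  ext z
  constructor
  · rintro ⟨w, hw, rfl⟩
    simp only [EMetric.closedBall, Metric.mem_closedEBall] at hw ⊢
    rw [edist_phiMap, ENNReal.zpow_add hQ0 hQt]
    exact mul_le_mul_right hw _
  · intro hz
    simp only [EMetric.closedBall, Metric.mem_closedEBall] at hz
    have hreal : qnorm Fq (z.val - (phiMap a ha c).val)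
        ≤ (Fintype.card Fq : ℝ) ^ (-2 * (a.natDegree : ℤ) + k) :=
      (edist_le_zpow_iff _ _ _).mp hz
    have hqc : qnorm Fq (phiMap a ha c).val = (Fintype.card Fq : ℝ) ^ (-(a.natDegree : ℤ)) :=
      qnorm_phiMap a ha c
    have hlt : qnorm Fq (z.val - (phiMap a ha c).val) < qnorm Fq (phiMap a ha c).val := by
      rw [hqc]
      refine lt_of_le_of_lt hreal ?_
      exact zpow_lt_zpow_right₀ one_lt_cardR (by omega)
    have hqz : qnorm Fq z.val = (Fintype.card Fq : ℝ) ^ (-(a.natDegree : ℤ)) := by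
      have : z.val = (phiMap a ha c).val + (z.val - (phiMap a ha c).val) := by ring
      rw [this, qnorm_add_eq_left hlt, hqc]
    have hz0 : z.val ≠ 0 := by
      intro h
      rw [h, qnorm_zero] at hqz
      exact absurd hqz.symm (ne_of_gt (zpow_pos cardR_pos _))
    have hphic0 : (phiMap a ha c).val ≠ 0 := by
      intro h
      rw [h, qnorm_zero] at hqc
      exact absurd hqc.symm (ne_of_gt (zpow_pos cardR_pos _))
    have hphicinv : ((phiMap a ha c).val)⁻¹ = polyToLS Fq a + c.val :=
      inv_inv (polyToLS Fq a + c.val) ▸ rfl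
    set wval := z.val⁻¹ - polyToLS Fq a with hwval
    have key : wval - c.val
        = ((phiMap a ha c).val - z.val) * (z.val * (phiMap a ha c).val)⁻¹ := by
      have h1 : wval - c.val = z.val⁻¹ - ((phiMap a ha c).val)⁻¹ := by
        rw [hphicinv, hwval]; ring
      rw [h1]
      field_simp
    have hqw : qnorm Fq (wval - c.val) ≤ (Fintype.card Fq : ℝ) ^ k := by
      rw [key, qnorm_mul, qnorm_inv, qnorm_mul, hqz, hqc,
        show (phiMap a ha c).val - z.val = -(z.val - (phiMap a ha c).val) by ring, qnorm_neg,
        ← zpow_add₀ (ne_of_gt (cardR_pos (Fq := Fq))), ← zpow_neg]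
      calc qnorm Fq (z.val - (phiMap a ha c).val) * (Fintype.card Fq : ℝ) ^ (-(-(a.natDegree:ℤ) + -(a.natDegree:ℤ)))
          ≤ (Fintype.card Fq : ℝ) ^ (-2 * (a.natDegree : ℤ) + k) * (Fintype.card Fq : ℝ) ^ (-(-(a.natDegree:ℤ) + -(a.natDegree:ℤ))) := by
            exact mul_le_mul_of_nonneg_right hreal (zpow_nonneg (le_of_lt cardR_pos) _)
        _ = (Fintype.card Fq : ℝ) ^ k := by
            rw [← zpow_add₀ (ne_of_gt (cardR_pos (Fq := Fq)))]
            congr 1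
            ring
    have hwlt : qnorm Fq wval < 1 := by
      have : wval = (wval - c.val) + c.val := by ring
      rw [this]
      refine lt_of_le_of_lt (qnorm_add_le _ _) ?_
      rw [max_lt_iff]
      refine ⟨lt_of_le_of_lt hqw ?_, c.norm_lt⟩
      exact zpow_lt_one_of_neg₀ one_lt_cardR (by omega)
    refine ⟨⟨wval, hwlt⟩, ?_, ?_⟩
    · simp only [EMetric.closedBall, Metric.mem_closedEBall]
      exact (edist_le_zpow_iff _ _ _).mpr hqw
    · apply Delta.ext'
      show (polyToLS Fq a + wval)⁻¹ = z.val
      rw [hwval, show polyToLS Fq a + (z.val⁻¹ - polyToLS Fq a) = z.val⁻¹ by ring, inv_inv]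

lemma cylinder_ball (n : ℕ) (A : Fin n → Polynomial Fq) (hA : ∀ i, A i ∈ poly1 Fq) :
    ∃ y u v : Delta Fq,
      cylinder Fq n A = EMetric.closedBall y
        ((Fintype.card Fq : ℝ≥0∞) ^ (-2 * (∑ i, ((A i).natDegree : ℤ)) - 1)) ∧
      u ∈ cylinder Fq n A ∧ v ∈ cylinder Fq n A ∧
      edist u v = (Fintype.card Fq : ℝ≥0∞) ^ (-2 * (∑ i, ((A i).natDegree : ℤ)) - 1) := by
  induction n with
  | zero =>
      have hz0 : qnorm Fq (0 : LaurentSeries Fq) < 1 := by rw [qnorm_zero]; exact one_pos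
      have hs1 : (HahnSeries.single (1:ℤ) (1:Fq) : LaurentSeries Fq) ≠ 0 :=
        HahnSeries.single_ne_zero one_ne_zero
      have hqs : qnorm Fq (HahnSeries.single (1:ℤ) (1:Fq))
          = (Fintype.card Fq : ℝ) ^ (-1 : ℤ) := by
        rw [qnorm_of_ne hs1]
        unfold lsDeg
        rw [HahnSeries.order_single one_ne_zero]
      have hv1 : qnorm Fq (HahnSeries.single (1:ℤ) (1:Fq)) < 1 := by
        rw [hqs]
        exact zpow_lt_one_of_neg₀ one_lt_cardR (by omega)
      refine ⟨⟨0, hz0⟩, ⟨0, hz0⟩, ⟨HahnSeries.single 1 1, hv1⟩, ?_, ?_, ?_, ?_⟩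
      · rw [cylinder_zero]
        ext x
        simp only [Set.mem_univ, true_iff, EMetric.closedBall, Metric.mem_closedEBall]
        rw [show (-2 * (∑ i : Fin 0, ((A i).natDegree : ℤ)) - 1) = (-1 : ℤ) by simp]
        rw [edist_le_zpow_iff]
        show qnorm Fq (x.val - 0) ≤ _
        rw [sub_zero]
        exact qnorm_le_of_lt_one x.norm_lt
      · rw [cylinder_zero]; trivial
      · rw [cylinder_zero]; trivial
      · rw [Delta.edist_def]
        show ENNReal.ofReal (qnorm Fq ((0:LaurentSeries Fq) - HahnSeries.single 1 1)) = _
        rw [zero_sub, qnorm_neg, hqs, ofReal_card_zpow,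
          show (-2 * (∑ i : Fin 0, ((A i).natDegree : ℤ)) - 1) = (-1 : ℤ) by simp]
  | succ n ih =>
      obtain ⟨y, u, v, hcyl, hu, hv, he⟩ :=
        ih (A ∘ Fin.succ) (fun i => hA i.succ)
      have h0 : A 0 ∈ poly1 Fq := hA 0
      set k : ℤ := -2 * (∑ i : Fin n, (((A ∘ Fin.succ) i).natDegree : ℤ)) - 1 with hkdef
      have hknn : (0:ℤ) ≤ ∑ i : Fin n, (((A ∘ Fin.succ) i).natDegree : ℤ) :=
        Finset.sum_nonneg (fun i _ => Int.ofNat_nonneg _)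
      have hk : k ≤ -1 := by omega
      have hexp : -2 * ((A 0).natDegree : ℤ) + k
          = -2 * (∑ i : Fin (n+1), ((A i).natDegree : ℤ)) - 1 := by
        rw [hkdef, Fin.sum_univ_succ]
        simp only [Function.comp_apply]
        ring
      have hQ0 : (Fintype.card Fq : ℝ≥0∞) ≠ 0 := by simp [Fintype.card_ne_zero]
      have hQt : (Fintype.card Fq : ℝ≥0∞) ≠ ⊤ := ENNReal.natCast_ne_top _
      refine ⟨phiMap (A 0) h0 y, phiMap (A 0) h0 u, phiMap (A 0) h0 v, ?_, ?_, ?_, ?_⟩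
      · rw [cylinder_succ n A h0, hcyl, phiMap_image_closedBall (A 0) h0 y k hk, hexp]
      · rw [cylinder_succ n A h0]; exact ⟨u, hu, rfl⟩
      · rw [cylinder_succ n A h0]; exact ⟨v, hv, rfl⟩
      · rw [edist_phiMap, he, ← ENNReal.zpow_add hQ0 hQt, hexp]

end Aux4

/-- Every fundamental cylinder is a disc of diameter `q^{-2 ∑ deg A_i - 1}`. -/
theorem cylinder_is_disc (Fq : Type) [Field Fq] [Fintype Fq]
    (n : ℕ) (hn : 1 ≤ n) (A : Fin n → Polynomial Fq) (hA : ∀ i, A i ∈ poly1 Fq) :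
    (∃ (y : Delta Fq) (r : ℝ≥0∞), cylinder Fq n A = EMetric.closedBall y r) ∧
    EMetric.diam (cylinder Fq n A)
      = (Fintype.card Fq : ℝ≥0∞) ^ (-2 * (∑ i : Fin n, ((A i).natDegree : ℤ)) - 1) := by
  obtain ⟨y, u, v, hcyl, hu, hv, he⟩ := cylinder_ball n A hA
  refine ⟨⟨y, _, hcyl⟩, ?_⟩
  apply le_antisymm
  · refine EMetric.diam_le ?_
    intro x hx z hz
    rw [hcyl] at hx hz
    simp only [EMetric.closedBall, Metric.mem_closedEBall] at hx hz
    refine le_trans (edist_le_max x y z) ?_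
    rw [max_le_iff]
    exact ⟨hx, by rwa [edist_comm] at hz⟩
  · rw [← he]
    exact EMetric.edist_le_diam_of_mem hu hv

end LaurentCF
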